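/- If G is a simple graph on a finite vertex set with ν(G) ≥ 2, then either there exist adjacent vertices u, v of G with ν(G − uv) = ν(G) − 2, or there exist distinct non-adjacent vertices u, v of G with ν(G + uv) = ν(G) − 2. -/

import Mathlib

open Matrix
open scoped Classical

/-- The closed neighborhood matrix of a simple graph over `ℤ₂`:
`N(G) u v = 1` iff `u = v` or `u` is adjacent to `v`. -/
noncomputable def nbhdMatrix {V : Type*} [Fintype V] (G : SimpleGraph V) :
    Matrix V V (ZMod 2) :=
  Matrix.of fun u v => if u = v ∨ G.Adj u v then 1 else 0

/-- The nullity of a matrix over `ℤ₂`: the dimension of its kernel. -/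
noncomputable def nullityM {V : Type*} [Fintype V] (M : Matrix V V (ZMod 2)) : ℕ :=
  Module.finrank (ZMod 2) (LinearMap.ker M.mulVecLin)

/-- The nullity `ν(G)` of a graph. -/
noncomputable def graphNullity {V : Type*} [Fintype V] (G : SimpleGraph V) : ℕ :=
  nullityM (nbhdMatrix G)

/-- Characteristic vector of a set of vertices. -/
noncomputable def chi {V : Type*} (A : Set V) : V → ZMod 2 :=
  fun v => if v ∈ A then 1 else 0

/-- A configuration `c` is solvable (w.r.t. the matrix `M`) if `M p = c` for some pattern `p`. -/
def Solv {V : Type*} [Fintype V] (M : Matrix V V (ZMod 2)) (c : V → ZMod 2) : Prop :=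
  ∃ p : V → ZMod 2, M.mulVec p = c

section Key

variable {V : Type*} [Fintype V]

lemma nbhd_isSymm (G : SimpleGraph V) : (nbhdMatrix G).IsSymm := by
  unfold Matrix.IsSymm
  ext i j
  simp only [Matrix.transpose_apply, nbhdMatrix, Matrix.of_apply]
  have : (j = i ∨ G.Adj j i) ↔ (i = j ∨ G.Adj i j) := by
    constructor <;> rintro (rfl | h)
    · exact Or.inl rfl
    · exact Or.inr h.symm
    · exact Or.inl rfl
    · exact Or.inr h.symm
  · rcases Classical.em (i = j ∨ G.Adj i j) with hc | hc
    · rw [if_pos (this.mpr hc), if_pos hc]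
    · rw [if_neg (fun hh => hc (this.mp hh)), if_neg hc]

/-- Key lemma: toggling the (u,v)/(v,u) entries of a symmetric matrix, when the
kernel restriction to coordinates u,v is surjective, drops nullity by 2. -/
lemma key (M M' : Matrix V V (ZMod 2)) (hsymm : M.IsSymm)
    {u v : V} (huv : u ≠ v) {ka kb : V → ZMod 2}
    (hka : M.mulVec ka = 0) (hkb : M.mulVec kb = 0)
    (hkau : ka u = 1) (hkav : ka v = 0) (hkbu : kb u = 0) (hkbv : kb v = 1)
    (hM' : ∀ x : V → ZMod 2,
      M'.mulVec x = M.mulVec x + (Pi.single u (x v) + Pi.single v (x u))) :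
    nullityM M' = nullityM M - 2 := by
  set K := LinearMap.ker M.mulVecLin with hK
  have hkaK : ka ∈ K := by simp [hK, LinearMap.mem_ker, Matrix.mulVecLin_apply, hka]
  have hkbK : kb ∈ K := by simp [hK, LinearMap.mem_ker, Matrix.mulVecLin_apply, hkb]
  -- the evaluation map ψ : K → ZMod 2 × ZMod 2
  set ψ : K →ₗ[ZMod 2] (ZMod 2 × ZMod 2) :=
    (((LinearMap.proj u).comp K.subtype).prod ((LinearMap.proj v).comp K.subtype)) with hψ
  have hψ_apply : ∀ x : K, ψ x = ((x : V → ZMod 2) u, (x : V → ZMod 2) v) := fun x => rfl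
  have hsurj : Function.Surjective ψ := by
    rintro ⟨a, b⟩
    refine ⟨a • ⟨ka, hkaK⟩ + b • ⟨kb, hkbK⟩, ?_⟩
    simp [hψ_apply, hkau, hkav, hkbu, hkbv]
  -- characterize ker M'
  have hkerM' : ∀ x : V → ZMod 2,
      M'.mulVec x = 0 ↔ (M.mulVec x = 0 ∧ x u = 0 ∧ x v = 0) := by
    intro x
    constructor
    · intro hx
      have hMx : M.mulVec x = Pi.single u (x v) + Pi.single v (x u) := by
        have h0 := hM' x
        rw [hx] at h0
        have h1 : M.mulVec x = -(Pi.single u (x v) + Pi.single v (x u)) :=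
          eq_neg_of_add_eq_zero_left h0.symm
        rw [h1]
        funext w
        have : ∀ a : ZMod 2, -a = a := by decide
        simp [this]
      -- dot products
      have hdot : ∀ k : V → ZMod 2, M.mulVec k = 0 →
          k u * x v + k v * x u = 0 := by
        intro k hk
        have h1 : k ⬝ᵥ M.mulVec x = 0 := by
          rw [Matrix.dotProduct_mulVec, ← Matrix.mulVec_transpose, hsymm.eq, hk]
          simp [dotProduct]
        rw [hMx] at h1
        rw [dotProduct_add] at h1
        rwa [dotProduct_single, dotProduct_single] at h1
      have hxv : x v = 0 := by
        have := hdot ka hka; rw [hkau, hkav] at this; simpa using this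
      have hxu : x u = 0 := by
        have := hdot kb hkb; rw [hkbu, hkbv] at this; simpa using this
      refine ⟨?_, hxu, hxv⟩
      rw [hMx, hxu, hxv]
      simp
    · rintro ⟨h1, h2, h3⟩
      rw [hM' x, h1, h2, h3]
      simp
  -- ker ψ maps onto ker M'
  have hmap : Submodule.map K.subtype (LinearMap.ker ψ) = LinearMap.ker M'.mulVecLin := by
    ext x
    simp only [Submodule.mem_map, LinearMap.mem_ker, Matrix.mulVecLin_apply]
    constructor
    · rintro ⟨⟨y, hyK⟩, hyker, rfl⟩
      rw [hkerM']
      have := hψ_apply ⟨y, hyK⟩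
      rw [hyker] at this
      have h1 : y u = 0 ∧ y v = 0 := by
        constructor
        · exact congrArg Prod.fst this.symm
        · exact congrArg Prod.snd this.symm
      exact ⟨by simpa [hK, Matrix.mulVecLin_apply] using hyK, h1.1, h1.2⟩
    · intro hx
      rw [hkerM'] at hx
      have hxK : x ∈ K := by simp [hK, LinearMap.mem_ker, Matrix.mulVecLin_apply, hx.1]
      refine ⟨⟨x, hxK⟩, ?_, rfl⟩
      have : ψ ⟨x, hxK⟩ = 0 := by
        rw [hψ_apply]
        simp [hx.2.1, hx.2.2, Prod.ext_iff]
      exact this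
  -- count
  have hrn := LinearMap.finrank_range_add_finrank_ker ψ
  have hrange : LinearMap.range ψ = ⊤ := LinearMap.range_eq_top.mpr hsurj
  rw [hrange] at hrn
  have htop : Module.finrank (ZMod 2) (⊤ : Submodule (ZMod 2) (ZMod 2 × ZMod 2)) = 2 := by
    rw [finrank_top, Module.finrank_prod, Module.finrank_self]
  rw [htop] at hrn
  have heq : Module.finrank (ZMod 2) (LinearMap.ker ψ)
      = Module.finrank (ZMod 2) (LinearMap.ker M'.mulVecLin) := by
    rw [← hmap]
    exact (Submodule.equivMapOfInjective K.subtype (Submodule.injective_subtype K)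
      (LinearMap.ker ψ)).finrank_eq
  have hKfr : Module.finrank (ZMod 2) K = Module.finrank (ZMod 2) (LinearMap.ker M.mulVecLin) := rfl
  unfold nullityM
  omega

end Key

section Exists

variable {V : Type*} [Fintype V]

lemma exists_uv (M : Matrix V V (ZMod 2)) (h : 2 ≤ nullityM M) :
    ∃ (u v : V) (ka kb : V → ZMod 2), u ≠ v ∧ M.mulVec ka = 0 ∧ M.mulVec kb = 0 ∧
      ka u = 1 ∧ ka v = 0 ∧ kb u = 0 ∧ kb v = 1 := by
  classical
  set K := LinearMap.ker M.mulVecLin with hK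
  have hKne : K ≠ ⊥ := by
    intro hbot
    rw [← Submodule.finrank_eq_zero (S := K)] at hbot
    unfold nullityM at h
    rw [← hK] at h
    omega
  obtain ⟨k1', hk1K, hk1ne⟩ := Submodule.exists_mem_ne_zero_of_ne_bot hKne
  obtain ⟨u, hu⟩ : ∃ u, k1' u ≠ 0 := Function.ne_iff.mp hk1ne
  have hone : ∀ a : ZMod 2, a ≠ 0 → a = 1 := by decide
  -- second kernel vector vanishing at u
  set φ : K →ₗ[ZMod 2] ZMod 2 := (LinearMap.proj u).comp K.subtype with hφ
  have hkerφ : LinearMap.ker φ ≠ ⊥ := by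
    intro hbot
    have hrn := LinearMap.finrank_range_add_finrank_ker φ
    rw [hbot] at hrn
    have h0 : Module.finrank (ZMod 2) (⊥ : Submodule (ZMod 2) K) = 0 := finrank_bot _ _
    have hle : Module.finrank (ZMod 2) (LinearMap.range φ) ≤ 1 := by
      have := Submodule.finrank_le (LinearMap.range φ)
      simpa using this
    have hKfr : Module.finrank (ZMod 2) K = nullityM M := rfl
    omega
  obtain ⟨k2', hk2K, hk2ne⟩ := Submodule.exists_mem_ne_zero_of_ne_bot hkerφ
  have hk2u : (k2' : V → ZMod 2) u = 0 := hk2K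
  have hk2vne : (k2' : V → ZMod 2) ≠ 0 := by
    intro h0
    exact hk2ne (Subtype.ext h0)
  obtain ⟨v, hv⟩ : ∃ v, (k2' : V → ZMod 2) v ≠ 0 := Function.ne_iff.mp hk2vne
  have huv : u ≠ v := by
    intro rfl'
    rw [← rfl'] at hv
    exact hv hk2u
  set k1 : V → ZMod 2 := (k1' : V → ZMod 2) with hk1
  set k2 : V → ZMod 2 := (k2' : V → ZMod 2) with hk2
  have hkm1 : M.mulVec k1 = 0 := hk1K
  have hkm2 : M.mulVec k2 = 0 := k2'.2
  refine ⟨u, v, k1 + (k1 v) • k2, k2, huv, ?_, hkm2, ?_, ?_, hk2u, hone _ hv⟩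
  · rw [Matrix.mulVec_add, Matrix.mulVec_smul, hkm1, hkm2]
    simp
  · simp [Pi.add_apply, hk2u, hone _ hu]
  · have h2 : ∀ a : ZMod 2, a + a = 0 := by decide
    simp [Pi.add_apply, hone _ hv, h2]

end Exists

section Toggle

variable {V : Type*} [Fintype V]

lemma toggle_mulVec {u v : V} (huv : u ≠ v) (N N' : Matrix V V (ZMod 2))
    (hN : ∀ w y, N' w y = N w y + (if (w = u ∧ y = v) ∨ (w = v ∧ y = u) then 1 else 0))
    (x : V → ZMod 2) :
    N'.mulVec x = N.mulVec x + (Pi.single u (x v) + Pi.single v (x u)) := by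
  funext w
  simp only [Matrix.mulVec, dotProduct, hN, add_mul, Finset.sum_add_distrib,
    Pi.add_apply]
  congr 1
  have hsum : ∀ y, (if (w = u ∧ y = v) ∨ (w = v ∧ y = u) then (1 : ZMod 2) else 0) * x y
      = (if (w = u ∧ y = v) ∨ (w = v ∧ y = u) then x y else 0) := by
    intro y
    split <;> simp
  rw [Finset.sum_congr rfl fun y _ => hsum y]
  by_cases hwu : w = u
  · have hcond : ∀ y, ((w = u ∧ y = v) ∨ (w = v ∧ y = u)) ↔ y = v := by
      intro y
      constructor
      · rintro (⟨_, h⟩ | ⟨h, _⟩)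
        · exact h
        · exact absurd (hwu ▸ h) huv
      · intro h; exact Or.inl ⟨hwu, h⟩
    simp only [hcond]
    rw [Finset.sum_ite_eq' Finset.univ v x]
    simp [Pi.single_apply, hwu, huv]
  · by_cases hwv : w = v
    · have hcond : ∀ y, ((w = u ∧ y = v) ∨ (w = v ∧ y = u)) ↔ y = u := by
        intro y
        constructor
        · rintro (⟨h, _⟩ | ⟨_, h⟩)
          · exact absurd h hwu
          · exact h
        · intro h; exact Or.inr ⟨hwv, h⟩
      simp only [hcond]
      rw [Finset.sum_ite_eq' Finset.univ u x]
      simp [Pi.single_apply, hwv, Ne.symm huv]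
    · have hcond : ∀ y, ¬((w = u ∧ y = v) ∨ (w = v ∧ y = u)) := by
        rintro y (⟨h, _⟩ | ⟨h, _⟩)
        · exact hwu h
        · exact hwv h
      simp [hcond, Pi.single_apply, hwu, hwv]

lemma delete_entry {G : SimpleGraph V} {u v : V} (hadj : G.Adj u v) (w y : V) :
    nbhdMatrix (G.deleteEdges {s(u, v)}) w y
      = nbhdMatrix G w y + (if (w = u ∧ y = v) ∨ (w = v ∧ y = u) then 1 else 0) := by
  have huv : u ≠ v := G.ne_of_adj hadj
  simp only [nbhdMatrix, Matrix.of_apply, SimpleGraph.deleteEdges_adj, Set.mem_singleton_iff]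
  by_cases hpair : (w = u ∧ y = v) ∨ (w = v ∧ y = u)
  · have hwy : w ≠ y := by
      rcases hpair with ⟨rfl, rfl⟩ | ⟨rfl, rfl⟩
      · exact huv
      · exact Ne.symm huv
    have hGadj : G.Adj w y := by
      rcases hpair with ⟨rfl, rfl⟩ | ⟨rfl, rfl⟩
      · exact hadj
      · exact hadj.symm
    have hmem : s(w, y) = s(u, v) := by
      rw [Sym2.eq_iff]
      rcases hpair with ⟨rfl, rfl⟩ | ⟨rfl, rfl⟩
      · exact Or.inl ⟨rfl, rfl⟩
      · exact Or.inr ⟨rfl, rfl⟩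
    rw [if_pos hpair, if_neg, if_pos (Or.inr hGadj)]
    · decide
    · rintro (h | ⟨_, h⟩)
      · exact hwy h
      · exact h hmem
  · have hmem : s(w, y) ≠ s(u, v) := fun hc => hpair (Sym2.eq_iff.mp hc)
    rw [if_neg hpair, add_zero]
    have : (w = y ∨ G.Adj w y ∧ ¬s(w, y) = s(u, v)) ↔ (w = y ∨ G.Adj w y) := by
      constructor
      · rintro (h | ⟨h, _⟩)
        · exact Or.inl h
        · exact Or.inr h
      · rintro (h | h)
        · exact Or.inl h
        · exact Or.inr ⟨h, hmem⟩
    rw [if_congr this rfl rfl]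

lemma add_entry {G : SimpleGraph V} {u v : V} (huv : u ≠ v) (hadj : ¬G.Adj u v) (w y : V) :
    nbhdMatrix (G ⊔ SimpleGraph.fromEdgeSet {s(u, v)}) w y
      = nbhdMatrix G w y + (if (w = u ∧ y = v) ∨ (w = v ∧ y = u) then 1 else 0) := by
  simp only [nbhdMatrix, Matrix.of_apply, SimpleGraph.sup_adj, SimpleGraph.fromEdgeSet_adj,
    Set.mem_singleton_iff]
  by_cases hpair : (w = u ∧ y = v) ∨ (w = v ∧ y = u)
  · have hwy : w ≠ y := by
      rcases hpair with ⟨rfl, rfl⟩ | ⟨rfl, rfl⟩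
      · exact huv
      · exact Ne.symm huv
    have hGadj : ¬G.Adj w y := by
      rcases hpair with ⟨rfl, rfl⟩ | ⟨rfl, rfl⟩
      · exact hadj
      · exact fun hc => hadj hc.symm
    have hmem : s(w, y) = s(u, v) := by
      rw [Sym2.eq_iff]
      rcases hpair with ⟨rfl, rfl⟩ | ⟨rfl, rfl⟩
      · exact Or.inl ⟨rfl, rfl⟩
      · exact Or.inr ⟨rfl, rfl⟩
    rw [if_pos hpair, if_pos (Or.inr (Or.inr ⟨hmem, hwy⟩)), if_neg]
    · decide
    · rintro (h | h)
      · exact hwy h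
      · exact hGadj h
  · have hmem : s(w, y) ≠ s(u, v) := fun hc => hpair (Sym2.eq_iff.mp hc)
    rw [if_neg hpair, add_zero]
    have : (w = y ∨ (G.Adj w y ∨ s(w, y) = s(u, v) ∧ w ≠ y)) ↔ (w = y ∨ G.Adj w y) := by
      constructor
      · rintro (h | h | ⟨h, _⟩)
        · exact Or.inl h
        · exact Or.inr h
        · exact absurd h hmem
      · rintro (h | h)
        · exact Or.inl h
        · exact Or.inr (Or.inl h)
    rw [if_congr this rfl rfl]

end Toggle

/-- If `ν(G) ≥ 2`, then either some edge removal or some edge addition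
decreases the nullity by exactly `2`. -/
theorem stmt1 {V : Type*} [Fintype V] (G : SimpleGraph V)
    (h : 2 ≤ graphNullity G) :
    (∃ u v : V, G.Adj u v ∧
      graphNullity (G.deleteEdges {s(u, v)}) = graphNullity G - 2) ∨
    (∃ u v : V, u ≠ v ∧ ¬ G.Adj u v ∧
      graphNullity (G ⊔ SimpleGraph.fromEdgeSet {s(u, v)}) = graphNullity G - 2) := by
  obtain ⟨u, v, ka, kb, huv, hka, hkb, hkau, hkav, hkbu, hkbv⟩ := exists_uv (nbhdMatrix G) h
  by_cases hadj : G.Adj u v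
  · left
    exact ⟨u, v, hadj, key (nbhdMatrix G) _ (nbhd_isSymm G) huv hka hkb hkau hkav hkbu hkbv
      (toggle_mulVec huv _ _ (delete_entry hadj))⟩
  · right
    exact ⟨u, v, huv, hadj, key (nbhdMatrix G) _ (nbhd_isSymm G) huv hka hkb hkau hkav hkbu hkbv
      (toggle_mulVec huv _ _ (add_entry huv hadj))⟩
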